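/- Let α ∈ (0,1) and T > 0. If f ∈ AC([0,T]), then I^α f ∈ AC([0,T]) and for almost every t ∈ (0,T), (I^α f)′(t) = (I^α f′)(t) + t^{α−1} f(0)/Γ(α). -/

import Mathlib

open MeasureTheory Set Filter Metric
open scoped Topology

lemma ae_hasDerivAt_primitive (g : ℝ → ℝ) (hg : Integrable g) :
    ∀ᵐ x : ℝ, HasDerivAt (fun u => ∫ s in (0:ℝ)..u, g s) (g x) x := by
  filter_upwards [IsUnifLocDoublingMeasure.ae_tendsto_average_norm_sub
    (μ := (volume : Measure ℝ)) hg.locallyIntegrable 1] with x hx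
  rw [hasDerivAt_iff_tendsto_slope]
  have key : Tendsto (fun y : ℝ =>
      ⨍ s in closedBall ((x + y)/2) (|y - x|/2), ‖g s - g x‖) (𝓝[≠] x) (𝓝 0) := by
    apply hx (fun y => (x + y)/2) (fun y => |y - x|/2)
    · rw [tendsto_nhdsWithin_iff]
      constructor
      · have : Tendsto (fun y : ℝ => |y - x|/2) (𝓝 x) (𝓝 (|x - x|/2)) :=
          (((continuous_id.sub continuous_const).abs.div_const 2).tendsto x)
        simpa using this.mono_left nhdsWithin_le_nhds
      · filter_upwards [self_mem_nhdsWithin] with y hy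
        have : y - x ≠ 0 := sub_ne_zero.2 hy
        exact mem_Ioi.2 (by positivity)
    · filter_upwards with y
      simp only [mem_closedBall, Real.dist_eq]
      rw [one_mul]
      have h1 : x - (x + y)/2 = (x - y)/2 := by ring
      rw [h1, abs_div, abs_sub_comm x y]
      simp
  have hb : ∀ᶠ y in 𝓝[≠] x, ‖slope (fun u => ∫ s in (0:ℝ)..u, g s) x y - g x‖ ≤
      ⨍ s in closedBall ((x + y)/2) (|y - x|/2), ‖g s - g x‖ := by
    filter_upwards [self_mem_nhdsWithin] with y hy
    have hyx : y - x ≠ 0 := sub_ne_zero.2 hy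
    set w := (x + y)/2 with hw
    set δ := |y - x|/2 with hδdef
    have hδ : 0 < δ := by positivity
    have hcb : uIcc x y ⊆ closedBall w δ := by
      rw [Real.closedBall_eq_Icc, uIcc]
      apply Icc_subset_Icc
      · rcases le_total x y with h | h
        · rw [min_eq_left h, hw, hδdef, abs_of_nonneg (sub_nonneg.2 h)]; linarith
        · rw [min_eq_right h, hw, hδdef, abs_of_nonpos (sub_nonpos.2 h)]; linarith
      · rcases le_total x y with h | h
        · rw [max_eq_right h, hw, hδdef, abs_of_nonneg (sub_nonneg.2 h)]; linarith
        · rw [max_eq_left h, hw, hδdef, abs_of_nonpos (sub_nonpos.2 h)]; linarith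
    have hslope : slope (fun u => ∫ s in (0:ℝ)..u, g s) x y - g x =
        (∫ s in x..y, (g s - g x)) / (y - x) := by
      rw [slope_def_field]
      rw [intervalIntegral.integral_sub hg.intervalIntegrable intervalIntegrable_const]
      rw [intervalIntegral.integral_const, intervalIntegral.integral_interval_sub_left
        hg.intervalIntegrable hg.intervalIntegrable]
      field_simp
      rw [smul_eq_mul]
    rw [hslope]
    have hicb : IntegrableOn (fun s => ‖g s - g x‖) (closedBall w δ) := by
      exact (hg.integrableOn.sub (integrableOn_const
        (measure_closedBall_lt_top.ne))).norm
    have h1 : ‖(∫ s in x..y, (g s - g x)) / (y - x)‖ ≤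
        (∫ s in Set.uIoc x y, ‖g s - g x‖) / |y - x| := by
      rw [norm_div, Real.norm_eq_abs (y - x)]
      gcongr
      exact intervalIntegral.norm_integral_le_integral_norm_uIoc
    have h2 : (∫ s in Set.uIoc x y, ‖g s - g x‖) ≤ ∫ s in closedBall w δ, ‖g s - g x‖ := by
      apply setIntegral_mono_set hicb
      · filter_upwards with s using norm_nonneg _
      · exact HasSubset.Subset.eventuallyLE (Set.uIoc_subset_uIcc.trans hcb)
    have hvol : (volume (closedBall w δ)).toReal = |y - x| := by
      rw [Real.volume_closedBall, ENNReal.toReal_ofReal (by positivity), hδdef]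
      ring
    rw [setAverage_eq, measureReal_def, hvol, smul_eq_mul]
    calc ‖(∫ s in x..y, (g s - g x)) / (y - x)‖
        ≤ (∫ s in Set.uIoc x y, ‖g s - g x‖) / |y - x| := h1
      _ ≤ (∫ s in closedBall w δ, ‖g s - g x‖) / |y - x| := by gcongr
      _ = |y - x|⁻¹ * ∫ s in closedBall w δ, ‖g s - g x‖ := div_eq_inv_mul _ _
  rw [tendsto_iff_norm_sub_tendsto_zero]
  exact squeeze_zero' (by filter_upwards with y using norm_nonneg _) hb key


lemma tri_swap {t α : ℝ} (ht : 0 < t) (hα : α ∈ Set.Ioo (0:ℝ) 1)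
    (φ : ℝ → ℝ) (hφm : Measurable φ) (hφi : IntegrableOn φ (Ioc 0 t))
    (κ : ℝ → ℝ → ℝ) (hκm : Measurable (fun p : ℝ × ℝ => κ p.1 p.2))
    (hκnn : ∀ x ∈ Ioc 0 t, ∀ s ∈ Ioc (0:ℝ) x, 0 ≤ κ x s)
    (hκint : ∀ s ∈ Ioc (0:ℝ) t, IntegrableOn (fun x => κ x s) (Ioc s t))
    (hval : ∀ s ∈ Ioc (0:ℝ) t, (∫ x in Ioc s t, κ x s) = (t - s)^α / α) :
    IntegrableOn (fun x => ∫ s in Ioc 0 x, κ x s * φ s) (Ioc 0 t) ∧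
    (∫ x in Ioc 0 t, ∫ s in Ioc 0 x, κ x s * φ s)
      = ∫ s in Ioc 0 t, ((t - s)^α / α) * φ s := by
  obtain ⟨hα0, hα1⟩ := hα
  set μ := volume.restrict (Ioc (0:ℝ) t) with hμ
  set F : ℝ × ℝ → ℝ :=
    (Set.indicator {p : ℝ × ℝ | p.2 ≤ p.1} (fun p => κ p.1 p.2 * φ p.2)) with hF
  have hFm : Measurable F :=
    (hκm.mul (hφm.comp measurable_snd)).indicator
      (measurableSet_le measurable_snd measurable_fst)
  -- inner slices
  have hfix_s : ∀ s : ℝ, (fun x => F (x, s)) =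
      Set.indicator (Ici s) (fun x => κ x s * φ s) := by
    intro s; funext x
    simp only [hF, Set.indicator_apply, mem_setOf_eq, mem_Ici]
  have hfix_x : ∀ x : ℝ, (fun s => F (x, s)) =
      Set.indicator (Iic x) (fun s => κ x s * φ s) := by
    intro x; funext s
    simp only [hF, Set.indicator_apply, mem_setOf_eq, mem_Iic]
  have e2 : ∀ s ∈ Ioc (0:ℝ) t, Ici s ∩ Ioc 0 t = Icc s t := by
    intro s hs; ext z
    simp only [mem_inter_iff, mem_Ici, mem_Ioc, mem_Icc]
    constructor
    · rintro ⟨h1, h2, h3⟩; exact ⟨h1, h3⟩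
    · rintro ⟨h1, h2⟩; exact ⟨h1, lt_of_lt_of_le hs.1 h1, h2⟩
  -- integral over x of a fixed-s slice
  have hslice_int : ∀ s ∈ Ioc (0:ℝ) t, Integrable (fun x => F (x, s)) μ := by
    intro s hs
    rw [hfix_s, hμ, integrable_indicator_iff measurableSet_Ici]
    show Integrable _ ((volume.restrict (Ioc 0 t)).restrict (Ici s))
    rw [Measure.restrict_restrict measurableSet_Ici, e2 s hs]
    exact (integrableOn_Icc_iff_integrableOn_Ioc).2 ((hκint s hs).mul_const (φ s))
  have hslice_val : ∀ s ∈ Ioc (0:ℝ) t,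
      (∫ x, F (x, s) ∂μ) = ((t - s)^α / α) * φ s := by
    intro s hs
    rw [hfix_s, hμ, integral_indicator measurableSet_Ici,
      Measure.restrict_restrict measurableSet_Ici, e2 s hs,
      integral_Icc_eq_integral_Ioc, integral_mul_const, hval s hs]
  have hslice_norm : ∀ s ∈ Ioc (0:ℝ) t,
      (∫ x, ‖F (x, s)‖ ∂μ) = ((t - s)^α / α) * ‖φ s‖ := by
    intro s hs
    have h0 : (fun x => ‖F (x, s)‖) =
        Set.indicator (Ici s) (fun x => ‖κ x s * φ s‖) := by
      funext x
      rw [show F (x, s) = Set.indicator (Ici s) (fun x => κ x s * φ s) x from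
        congrFun (hfix_s s) x, norm_indicator_eq_indicator_norm]
    rw [h0, hμ, integral_indicator measurableSet_Ici,
      Measure.restrict_restrict measurableSet_Ici, e2 s hs,
      integral_Icc_eq_integral_Ioc]
    have : ∀ x ∈ Ioc s t, ‖κ x s * φ s‖ = κ x s * ‖φ s‖ := by
      intro x hx
      rw [norm_mul, Real.norm_eq_abs (κ x s),
        abs_of_nonneg (hκnn x ⟨lt_trans hs.1 hx.1, hx.2⟩ s ⟨hs.1, hx.1.le⟩)]
    rw [setIntegral_congr_fun measurableSet_Ioc this, integral_mul_const, hval s hs]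
  -- product integrability
  have hFaesm : AEStronglyMeasurable F (μ.prod μ) := hFm.aestronglyMeasurable
  have hprod : Integrable F (μ.prod μ) := by
    rw [integrable_prod_iff' hFaesm]
    constructor
    · exact (ae_restrict_mem measurableSet_Ioc).mono fun s hs => hslice_int s hs
    · have hb : ∀ᵐ s ∂μ, ‖∫ x, ‖F (x, s)‖ ∂μ‖ ≤ (t^α / α) * ‖φ s‖ := by
        refine (ae_restrict_mem measurableSet_Ioc).mono fun s hs => ?_
        have hnn : (0:ℝ) ≤ (t - s)^α / α * ‖φ s‖ :=
          mul_nonneg (div_nonneg (Real.rpow_nonneg (sub_nonneg.2 hs.2) α) hα0.le)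
            (norm_nonneg _)
        rw [hslice_norm s hs, Real.norm_eq_abs, abs_of_nonneg hnn]
        have h1 : (t - s)^α ≤ t^α :=
          Real.rpow_le_rpow (sub_nonneg.2 hs.2) (by linarith [hs.1.le]) hα0.le
        gcongr
      have hb' : ∀ᵐ s ∂μ, ‖∫ x, ‖F (x, s)‖ ∂μ‖ ≤ ‖(t^α / α) * ‖φ s‖‖ :=
        hb.mono fun s h => h.trans (le_abs_self _)
      refine Integrable.mono (hφi.norm.const_mul (t^α / α)) ?_ hb'
      have : Measurable (fun q : ℝ × ℝ => ‖F (q.2, q.1)‖) :=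
        (hFm.comp measurable_swap).norm
      exact this.aestronglyMeasurable.integral_prod_right'
  -- swap
  have hswap := integral_integral_swap (μ := μ) (ν := μ)
    (f := fun x s => F (x, s)) hprod
  have e1 : ∀ x ∈ Ioc (0:ℝ) t, (∫ s, F (x, s) ∂μ) = ∫ s in Ioc 0 x, κ x s * φ s := by
    intro x hx
    rw [hfix_x, hμ, integral_indicator measurableSet_Iic,
      Measure.restrict_restrict measurableSet_Iic]
    congr 1
    rw [inter_comm, Set.Ioc_inter_Iic, min_eq_right hx.2]
  constructor
  · have hInt : Integrable (fun x => ∫ s, F (x, s) ∂μ) μ := hprod.integral_prod_left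
    exact (IntegrableOn.congr_fun (by exact hInt) (fun x hx => e1 x hx) measurableSet_Ioc)
  · calc (∫ x in Ioc 0 t, ∫ s in Ioc 0 x, κ x s * φ s)
        = ∫ x, (∫ s, F (x, s) ∂μ) ∂μ := by
          rw [hμ]
          exact (setIntegral_congr_fun measurableSet_Ioc (fun x hx => (e1 x hx).symm))
      _ = ∫ s, (∫ x, F (x, s) ∂μ) ∂μ := hswap
      _ = ∫ s in Ioc 0 t, ((t - s)^α / α) * φ s := by
          rw [hμ]
          exact setIntegral_congr_fun measurableSet_Ioc (fun s hs => hslice_val s hs)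


section Aux

lemma base_rpow_val {α c : ℝ} (hα0 : 0 < α) (hc : 0 ≤ c) :
    ∫ u in (0:ℝ)..c, u ^ (α - 1) = c ^ α / α := by
  rw [integral_rpow (Or.inl (by linarith : (-1:ℝ) < α - 1))]
  have h1 : α - 1 + 1 = α := by ring
  rw [h1, Real.zero_rpow hα0.ne']
  ring

lemma kernelB_int {α s t : ℝ} (hα0 : 0 < α) (hα1 : α < 1) (hst : s ≤ t) :
    IntegrableOn (fun x => (x - s) ^ (α - 1)) (Ioc s t) := by
  have h := (intervalIntegral.intervalIntegrable_rpow' (r := α - 1) (a := 0) (b := t - s)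
    (by linarith)).comp_sub_right s
  rw [← intervalIntegrable_iff_integrableOn_Ioc_of_le hst]
  simpa using h

lemma kernelB_val {α s t : ℝ} (hα0 : 0 < α) (hst : s ≤ t) :
    (∫ x in Ioc s t, (x - s) ^ (α - 1)) = (t - s) ^ α / α := by
  rw [← intervalIntegral.integral_of_le hst,
    intervalIntegral.integral_comp_sub_right (fun u => u ^ (α - 1)) s, sub_self]
  exact base_rpow_val hα0 (by linarith)

lemma kernelA_int {α s t c : ℝ} (hα0 : 0 < α) (hα1 : α < 1) (hst : s ≤ t) (htc : t ≤ c) :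
    IntegrableOn (fun x => (c - x) ^ (α - 1)) (Ioc s t) := by
  have h := (intervalIntegral.intervalIntegrable_rpow' (r := α - 1) (a := c - t) (b := c - s)
    (by linarith)).comp_sub_left c
  rw [← intervalIntegrable_iff_integrableOn_Ioc_of_le hst]
  have h2 : IntervalIntegrable (fun x => (c - x) ^ (α - 1)) volume t s := by simpa using h
  exact h2.symm

lemma kernelA_val {α s t : ℝ} (hα0 : 0 < α) (hst : s ≤ t) :
    (∫ x in Ioc s t, (t - x) ^ (α - 1)) = (t - s) ^ α / α := by
  rw [← intervalIntegral.integral_of_le hst,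
    intervalIntegral.integral_comp_sub_left (fun u => u ^ (α - 1)) t, sub_self]
  exact base_rpow_val hα0 (by linarith)

end Aux


/-- Riemann–Liouville fractional integral of order `α`:
`(I^α f)(t) = (1/Γ(α)) ∫₀^t (t-τ)^{α-1} f(τ) dτ`. -/
noncomputable def fracInt (α : ℝ) (f : ℝ → ℝ) (t : ℝ) : ℝ :=
  (1 / Real.Gamma α) * ∫ τ in (0:ℝ)..t, (t - τ) ^ (α - 1) * f τ

/-- If `f` is absolutely continuous on `[0,T]` (with a.e. derivative `f'`),
then `I^α f` is absolutely continuous on `[0,T]` and for a.e. `t ∈ (0,T)`,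
`(I^α f)'(t) = (I^α f')(t) + t^{α-1} f(0)/Γ(α)`. -/
theorem stmt_7 (α T : ℝ) (hα : α ∈ Set.Ioo (0:ℝ) 1) (hT : 0 < T)
    (f f' : ℝ → ℝ)
    (hf'int : IntegrableOn f' (Set.Icc 0 T))
    (hfAC : ∀ t ∈ Set.Icc (0:ℝ) T, f t = f 0 + ∫ τ in (0:ℝ)..t, f' τ) :
    (∃ g : ℝ → ℝ, IntegrableOn g (Set.Icc 0 T) ∧
        ∀ t ∈ Set.Icc (0:ℝ) T, fracInt α f t = fracInt α f 0 + ∫ τ in (0:ℝ)..t, g τ) ∧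
      ∀ᵐ t ∂(volume.restrict (Set.Ioo 0 T)),
        HasDerivAt (fracInt α f)
          (fracInt α f' t + t ^ (α - 1) * f 0 / Real.Gamma α) t := by
  obtain ⟨hα0, hα1⟩ := hα
  have hΓ : 0 < Real.Gamma α := Real.Gamma_pos_of_pos hα0
  have hsm := hf'int.aestronglyMeasurable
  set φ : ℝ → ℝ := hsm.mk f' with hφdef
  have hφm : Measurable φ := hsm.stronglyMeasurable_mk.measurable
  have hφae : f' =ᵐ[volume.restrict (Icc 0 T)] φ := hsm.ae_eq_mk
  have hφi : IntegrableOn φ (Icc 0 T) := (integrable_congr hφae).1 hf'int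
  have hIoc_sub : ∀ t : ℝ, t ≤ T → Ioc (0:ℝ) t ⊆ Icc 0 T :=
    fun t ht => Ioc_subset_Icc_self.trans (Icc_subset_Icc_right ht)
  have hsub : ∀ t : ℝ, t ≤ T → f' =ᵐ[volume.restrict (Ioc 0 t)] φ :=
    fun t ht => ae_restrict_of_ae_restrict_of_subset (hIoc_sub t ht) hφae
  have hphi_i : ∀ t : ℝ, t ≤ T → IntegrableOn φ (Ioc 0 t) :=
    fun t ht => hφi.mono_set (hIoc_sub t ht)
  -- the two Fubini swaps
  have swapB : ∀ t ∈ Ioc (0:ℝ) T,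
      IntegrableOn (fun x => ∫ s in Ioc 0 x, (x - s)^(α-1) * φ s) (Ioc 0 t) ∧
      (∫ x in Ioc 0 t, ∫ s in Ioc 0 x, (x - s)^(α-1) * φ s)
        = ∫ s in Ioc 0 t, ((t - s)^α / α) * φ s := by
    intro t ht
    refine tri_swap ht.1 ⟨hα0, hα1⟩ φ hφm (hphi_i t ht.2)
      (fun x s => (x - s)^(α-1)) ((measurable_fst.sub measurable_snd).pow_const _)
      ?_ ?_ ?_
    · intro x _ s hs; exact Real.rpow_nonneg (by linarith [hs.2]) _
    · intro s hs; exact kernelB_int hα0 hα1 hs.2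
    · intro s hs; exact kernelB_val hα0 hs.2
  have swapA : ∀ t ∈ Ioc (0:ℝ) T,
      IntegrableOn (fun x => ∫ s in Ioc 0 x, (t - x)^(α-1) * φ s) (Ioc 0 t) ∧
      (∫ x in Ioc 0 t, ∫ s in Ioc 0 x, (t - x)^(α-1) * φ s)
        = ∫ s in Ioc 0 t, ((t - s)^α / α) * φ s := by
    intro t ht
    refine tri_swap ht.1 ⟨hα0, hα1⟩ φ hφm (hphi_i t ht.2)
      (fun x _ => (t - x)^(α-1)) ((measurable_const.sub measurable_fst).pow_const _)
      ?_ ?_ ?_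
    · intro x hx s _; exact Real.rpow_nonneg (by linarith [hx.2]) _
    · intro s hs; exact kernelA_int hα0 hα1 hs.2 le_rfl
    · intro s hs; exact kernelA_val hα0 hs.2
  -- the candidate density
  set G : ℝ → ℝ := fun x => ∫ s in Ioc 0 x, (x - s)^(α-1) * φ s with hGdef
  set h : ℝ → ℝ :=
    fun u => (1/Real.Gamma α) * G u + u^(α-1) * f 0 / Real.Gamma α with hhdef
  set g : ℝ → ℝ := (Ioc (0:ℝ) T).indicator h with hgdef
  have hrpow_int : IntegrableOn (fun u : ℝ => u^(α-1)) (Ioc 0 T) := by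
    have := kernelB_int (s := 0) (t := T) hα0 hα1 hT.le
    simpa using this
  have hh_int : IntegrableOn h (Ioc 0 T) :=
    ((swapB T ⟨hT, le_rfl⟩).1.const_mul _).add
      ((hrpow_int.mul_const (f 0)).div_const (Real.Gamma α))
  have hg_int : Integrable g := (integrable_indicator_iff measurableSet_Ioc).2 hh_int
  -- primitive F₁ of φ
  set F₁ : ℝ → ℝ := fun τ => ∫ s in Ioc 0 τ, φ s with hF₁def
  have hF₁cont : ContinuousOn F₁ (Icc 0 T) := intervalIntegral.continuousOn_primitive hφi
  obtain ⟨C, hC⟩ := isCompact_Icc.exists_bound_of_continuousOn hF₁cont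
  have hF₁eq : ∀ τ ∈ Icc (0:ℝ) T, f τ = f 0 + F₁ τ := by
    intro τ hτ
    rw [hfAC τ hτ, hF₁def]
    congr 1
    rw [intervalIntegral.integral_of_le hτ.1]
    exact integral_congr_ae (hsub τ hτ.2)
  -- key identity
  have key : ∀ t ∈ Ioc (0:ℝ) T, fracInt α f t = ∫ u in Ioc 0 t, h u := by
    intro t ht
    have hsub' : Ioc (0:ℝ) t ⊆ Icc 0 T := hIoc_sub t ht.2
    have hRHS : ∫ u in Ioc 0 t, h u
        = (1/Real.Gamma α) * (∫ s in Ioc 0 t, ((t - s)^α/α) * φ s)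
          + (t^α/α) * f 0 / Real.Gamma α := by
      rw [hhdef]
      rw [integral_add ((swapB t ht).1.const_mul _)
        ((hrpow_int.mono_set (Ioc_subset_Ioc_right ht.2)).mul_const (f 0)
          |>.div_const (Real.Gamma α))]
      congr 1
      · rw [integral_const_mul, (swapB t ht).2]
      · simp_rw [mul_div_assoc]
        rw [integral_mul_const]
        congr 2
        rw [← intervalIntegral.integral_of_le ht.1.le]
        exact base_rpow_val hα0 ht.1.le
    have IA1 : IntegrableOn (fun τ => (t - τ)^(α-1) * f 0) (Ioc 0 t) :=
      (kernelA_int (s := 0) hα0 hα1 ht.1.le le_rfl).mul_const _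
    have IA2 : IntegrableOn (fun τ => F₁ τ * (t - τ)^(α-1)) (Ioc 0 t) := by
      refine Integrable.bdd_mul (c := C)
        (kernelA_int (s := 0) hα0 hα1 ht.1.le le_rfl)
        ((hF₁cont.mono hsub').aestronglyMeasurable measurableSet_Ioc) ?_
      exact (ae_restrict_mem measurableSet_Ioc).mono fun τ hτ => hC τ (hsub' hτ)
    have hLHS : (∫ τ in (0:ℝ)..t, (t - τ)^(α-1) * f τ)
        = f 0 * (t^α/α) + ∫ s in Ioc 0 t, ((t - s)^α/α) * φ s := by
      rw [intervalIntegral.integral_of_le ht.1.le]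
      have e : ∀ τ ∈ Ioc (0:ℝ) t, (t - τ)^(α-1) * f τ
          = (t - τ)^(α-1) * f 0 + F₁ τ * (t - τ)^(α-1) := by
        intro τ hτ
        rw [hF₁eq τ (hsub' hτ)]
        ring
      rw [setIntegral_congr_fun measurableSet_Ioc e, integral_add IA1 IA2]
      congr 1
      · rw [integral_mul_const]
        have := kernelA_val (s := 0) (t := t) hα0 ht.1.le
        simp only [sub_zero] at this
        rw [this, mul_comm]
      · rw [← (swapA t ht).2]
        refine setIntegral_congr_fun measurableSet_Ioc (fun x _ => ?_)
        rw [integral_const_mul, mul_comm]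
    rw [fracInt, hLHS, hRHS]
    ring
  have hfrac0 : fracInt α f 0 = 0 := by simp [fracInt]
  have hrep : ∀ t ∈ Icc (0:ℝ) T,
      fracInt α f t = fracInt α f 0 + ∫ τ in (0:ℝ)..t, g τ := by
    intro t ht
    rcases eq_or_lt_of_le ht.1 with h0 | h0
    · rw [← h0, hfrac0]
      simp
    · have htm : t ∈ Ioc (0:ℝ) T := ⟨h0, ht.2⟩
      rw [hfrac0, zero_add, intervalIntegral.integral_of_le ht.1,
        setIntegral_congr_fun measurableSet_Ioc
          (fun u hu => indicator_of_mem (Ioc_subset_Ioc_right ht.2 hu) h)]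
      exact key t htm
  refine ⟨⟨g, hg_int.integrableOn, hrep⟩, ?_⟩
  have hder := ae_hasDerivAt_primitive g hg_int
  refine ((ae_restrict_of_ae hder).and (ae_restrict_mem measurableSet_Ioo)).mono ?_
  rintro t ⟨hd, ht⟩
  have htm : t ∈ Ioc (0:ℝ) T := ⟨ht.1, ht.2.le⟩
  have hev : (fun u => ∫ s in (0:ℝ)..u, g s) =ᶠ[𝓝 t] fracInt α f := by
    filter_upwards [isOpen_Ioo.mem_nhds ht] with u hu
    rw [hrep u ⟨hu.1.le, hu.2.le⟩, hfrac0, zero_add]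
  have hD : HasDerivAt (fracInt α f) (g t) t := hd.congr_of_eventuallyEq hev.symm
  have hgt : g t = fracInt α f' t + t^(α-1) * f 0 / Real.Gamma α := by
    rw [hgdef, indicator_of_mem htm]
    have hGt : (1/Real.Gamma α) * G t = fracInt α f' t := by
      rw [fracInt, hGdef]
      congr 1
      rw [intervalIntegral.integral_of_le htm.1.le]
      have hae : (fun s => (t - s)^(α-1) * φ s) =ᵐ[volume.restrict (Ioc 0 t)]
          (fun s => (t - s)^(α-1) * f' s) :=
        (hsub t htm.2).mono fun τ hτ => by simp only; rw [hτ]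
      exact integral_congr_ae hae
    show (1/Real.Gamma α) * G t + t^(α-1) * f 0 / Real.Gamma α
        = fracInt α f' t + t^(α-1) * f 0 / Real.Gamma α
    rw [hGt]
  exact hgt ▸ hD
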